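/- arXiv:1910.03740 — 3 statements merged into one kernel-verified Lean document; each statement's English description precedes it below -/
import Mathlib

section
/- Let s ≥ 2 and suppose the Keller graph G_{6,s} contains no clique of size 64. If G_{7,s} contains a clique of size 128, then G_{7,s} contains a clique of size 128 that includes the vertices (0,0,0,0,0,0,0) and (s,1,0,0,0,0,0). -/
/-- The Keller graph `G_{n,s}`: vertices are `n`-tuples with entries in `{0,…,2s-1}`,
two vertices adjacent iff they differ by exactly `s` in at least one coordinate
and differ in at least two coordinates. -/
def kellerGraph (n s : ℕ) : SimpleGraph (Fin n → Fin (2 * s)) where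
  Adj x y :=
    (∃ i, (x i : ℕ) + s = (y i : ℕ) ∨ (y i : ℕ) + s = (x i : ℕ)) ∧
    (∃ i j, i ≠ j ∧ x i ≠ y i ∧ x j ≠ y j)
  symm := by
    constructor
    rintro x y ⟨⟨i, h⟩, j, k, hjk, hj, hk⟩
    exact ⟨⟨i, Or.symm h⟩, j, k, hjk, hj.symm, hk.symm⟩
  loopless := by
    constructor
    rintro x ⟨-, j, k, hjk, hj, hk⟩
    exact hj rfl

namespace KellerPf

lemma keller_adj {n s : ℕ} (x y : Fin n → Fin (2*s)) :
    (kellerGraph n s).Adj x y ↔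
      ((∃ i, (x i : ℕ) + s = (y i : ℕ) ∨ (y i : ℕ) + s = (x i : ℕ)) ∧
       (∃ i j, i ≠ j ∧ x i ≠ y i ∧ x j ≠ y j)) := Iff.rfl

def padd (s : ℕ) (a : Fin (2*s)) : Fin (2*s) :=
  ⟨if (a:ℕ) < s then (a:ℕ) + s else (a:ℕ) - s, by
    have h := a.isLt; split <;> omega⟩

lemma padd_val {s : ℕ} (a : Fin (2*s)) :
    ((padd s a) : ℕ) = if (a:ℕ) < s then (a:ℕ) + s else (a:ℕ) - s := rfl

lemma padd_padd {s : ℕ} (a : Fin (2*s)) : padd s (padd s a) = a := by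
  have h := a.isLt
  apply Fin.ext
  simp only [padd_val]
  split_ifs <;> omega

lemma padd_ne {s : ℕ} (hs : 1 ≤ s) (a : Fin (2*s)) : padd s a ≠ a := by
  have h := a.isLt
  simp only [Ne, Fin.ext_iff, padd_val]
  split_ifs <;> omega

lemma padd_inj {s : ℕ} {a b : Fin (2*s)} (h : padd s a = padd s b) : a = b := by
  have := congrArg (padd s) h
  rwa [padd_padd, padd_padd] at this

lemma sdiff_iff {s : ℕ} (a b : Fin (2*s)) :
    ((a:ℕ) + s = (b:ℕ) ∨ (b:ℕ) + s = (a:ℕ)) ↔ b = padd s a := by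
  have ha := a.isLt; have hb := b.isLt
  rw [Fin.ext_iff]
  simp only [padd_val]
  split_ifs <;> omega

def sub' {s : ℕ} (a b : Fin (2*s)) : Fin (2*s) :=
  ⟨if (b:ℕ) ≤ (a:ℕ) then (a:ℕ) - (b:ℕ) else (a:ℕ) + 2*s - (b:ℕ), by
    have ha := a.isLt; have hb := b.isLt; split <;> omega⟩

lemma sub'_val {s : ℕ} (a b : Fin (2*s)) :
    ((sub' a b) : ℕ) = if (b:ℕ) ≤ (a:ℕ) then (a:ℕ) - (b:ℕ) else (a:ℕ) + 2*s - (b:ℕ) := rfl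

lemma sub'_inj {s : ℕ} {a b c : Fin (2*s)} (h : sub' a c = sub' b c) : a = b := by
  have ha := a.isLt; have hb := b.isLt; have hc := c.isLt
  rw [Fin.ext_iff] at h ⊢
  simp only [sub'_val] at h
  split_ifs at h <;> omega

lemma sub'_padd {s : ℕ} (a c : Fin (2*s)) : sub' (padd s a) c = padd s (sub' a c) := by
  have ha := a.isLt; have hc := c.isLt
  apply Fin.ext
  simp only [sub'_val, padd_val]
  split_ifs <;> omega

lemma sub'_self {s : ℕ} (a : Fin (2*s)) (h : 0 < 2*s) : sub' a a = ⟨0, h⟩ := by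
  apply Fin.ext
  simp only [sub'_val]
  split_ifs <;> omega

lemma sub'_padd_self {s : ℕ} (a : Fin (2*s)) (h : s < 2*s) :
    sub' (padd s a) a = ⟨s, h⟩ := by
  have ha := a.isLt
  apply Fin.ext
  simp only [sub'_val, padd_val]
  split_ifs <;> omega

def tau (s : ℕ) (d e x : Fin (2*s)) : Fin (2*s) :=
  if x = d then e
  else if x = padd s d then padd s e
  else if x = e then d
  else if x = padd s e then padd s d
  else x

lemma tau_invol {s : ℕ} (d e x : Fin (2*s)) : tau s d e (tau s d e x) = x := by
  have hd := d.isLt; have he := e.isLt; have hx := x.isLt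
  unfold tau
  split_ifs <;>
    first
      | rfl
      | (simp only [Fin.ext_iff, padd_val] at * <;> (try split_ifs at *) <;>
          first | omega | simp_all)

lemma tau_inj {s : ℕ} (d e : Fin (2*s)) : Function.Injective (tau s d e) := by
  intro x y h
  have := congrArg (tau s d e) h
  rwa [tau_invol, tau_invol] at this

lemma tau_padd {s : ℕ} (d e x : Fin (2*s)) :
    tau s d e (padd s x) = padd s (tau s d e x) := by
  have hd := d.isLt; have he := e.isLt; have hx := x.isLt
  unfold tau
  split_ifs <;>
    first
      | rfl
      | (simp only [Fin.ext_iff, padd_val] at * <;> (try split_ifs at *) <;>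
          first | omega | simp_all)

lemma tau_fst {s : ℕ} (d e : Fin (2*s)) : tau s d e d = e := by
  unfold tau; rw [if_pos rfl]

lemma tau_zero {s : ℕ} (hs : 2 ≤ s) (d : Fin (2*s)) (hd0 : (d:ℕ) ≠ 0) (hds : (d:ℕ) ≠ s)
    (h1 : 1 < 2*s) (h0 : 0 < 2*s) :
    tau s d ⟨1, h1⟩ ⟨0, h0⟩ = ⟨0, h0⟩ := by
  have hd := d.isLt
  unfold tau
  split_ifs <;>
    first
      | rfl
      | (simp only [Fin.ext_iff, padd_val] at * <;> (try split_ifs at *) <;>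
          first | omega | simp_all)

end KellerPf

namespace KP2

open KellerPf

def C7 {s : ℕ} (K : Finset (Fin 7 → Fin (2*s))) (t : Fin (2*s)) : ℕ :=
  (K.filter fun w => w 0 = t).card

def P7 {s : ℕ} (K : Finset (Fin 7 → Fin (2*s))) (t : Fin (2*s)) : Prop :=
  C7 K (padd s t) < C7 K t ∨ (C7 K (padd s t) = C7 K t ∧ (t:ℕ) < s)

instance {s : ℕ} (K : Finset (Fin 7 → Fin (2*s))) : DecidablePred (P7 K) := fun t => by
  unfold P7; exact inferInstance

lemma padd_lt_iff {s : ℕ} (t : Fin (2*s)) : ((padd s t) : ℕ) < s ↔ ¬ ((t:ℕ) < s) := by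
  have := t.isLt; simp only [padd_val]; split_ifs <;> omega

lemma P7_or {s : ℕ} (K : Finset (Fin 7 → Fin (2*s))) (t : Fin (2*s)) :
    P7 K t ∨ P7 K (padd s t) := by
  unfold P7; rw [padd_padd]; have h := padd_lt_iff t; omega

lemma P7_not_both {s : ℕ} (K : Finset (Fin 7 → Fin (2*s))) (t : Fin (2*s)) :
    ¬ (P7 K t ∧ P7 K (padd s t)) := by
  unfold P7; rw [padd_padd]; have h := padd_lt_iff t; omega

end KP2

namespace KP2
open KellerPf

def pr7 {s : ℕ} (w : Fin 7 → Fin (2*s)) (k : Fin 6) : Fin (2*s) := w k.succ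

lemma exists_good_pair (s : ℕ) (hs : 2 ≤ s)
    (h6 : ∀ K : Finset (Fin 6 → Fin (2 * s)), ¬ (kellerGraph 6 s).IsNClique 64 K)
    (K : Finset (Fin 7 → Fin (2 * s))) (hK : (kellerGraph 7 s).IsNClique 128 K) :
    ∃ u ∈ K, ∃ v ∈ K, ∃ i j : Fin 7, i ≠ j ∧ v i = padd s (u i) ∧ v j ≠ u j ∧
      v j ≠ padd s (u j) ∧ ∀ k, k ≠ i → k ≠ j → v k = u k := by
  classical
  by_contra Hc
  push_neg at Hc
  -- Hc : ∀ u ∈ K, ∀ v ∈ K, ∀ i j, i ≠ j → v i = padd s (u i) → v j ≠ u j →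
  --        v j ≠ padd s (u j) → ∃ k, k ≠ i ∧ k ≠ j ∧ v k ≠ u k
  set A := K.filter (fun w => P7 K (w 0)) with hA
  set B := K.filter (fun w => ¬ P7 K (w 0)) with hB
  have hcard : A.card + B.card = 128 := by
    rw [hA, hB, Finset.card_filter_add_card_filter_not]; exact hK.2
  have hAfib : A.card = ∑ t ∈ Finset.univ.filter (fun t => P7 K t), C7 K t := by
    rw [Finset.card_eq_sum_card_fiberwise (f := fun w => w 0)
      (t := Finset.univ.filter (fun t => P7 K t))
      (fun w hw => by simp only [hA, Finset.mem_coe, Finset.mem_filter] at hw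
                      simp [hw.2])]
    refine Finset.sum_congr rfl ?_
    intro t ht
    simp only [Finset.mem_filter, Finset.mem_univ, true_and] at ht
    unfold C7
    congr 1
    ext w
    simp only [hA, Finset.mem_filter]
    constructor
    · rintro ⟨⟨h1, h2⟩, h3⟩; exact ⟨h1, h3⟩
    · rintro ⟨h1, h3⟩; exact ⟨⟨h1, by rw [h3]; exact ht⟩, h3⟩
  have hBfib : B.card = ∑ t ∈ Finset.univ.filter (fun t => ¬ P7 K t), C7 K t := by
    rw [Finset.card_eq_sum_card_fiberwise (f := fun w => w 0)
      (t := Finset.univ.filter (fun t => ¬ P7 K t))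
      (fun w hw => by simp only [hB, Finset.mem_coe, Finset.mem_filter] at hw
                      simp [hw.2])]
    refine Finset.sum_congr rfl ?_
    intro t ht
    simp only [Finset.mem_filter, Finset.mem_univ, true_and] at ht
    unfold C7
    congr 1
    ext w
    simp only [hB, Finset.mem_filter]
    constructor
    · rintro ⟨⟨h1, h2⟩, h3⟩; exact ⟨h1, h3⟩
    · rintro ⟨h1, h3⟩; exact ⟨⟨h1, by rw [h3]; exact ht⟩, h3⟩
  have hBA : B.card ≤ A.card := by
    rw [hAfib, hBfib]
    calc ∑ t ∈ Finset.univ.filter (fun t => ¬ P7 K t), C7 K t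
        ≤ ∑ t ∈ Finset.univ.filter (fun t => ¬ P7 K t), C7 K (padd s t) := by
          refine Finset.sum_le_sum ?_
          intro t ht
          simp only [Finset.mem_filter, Finset.mem_univ, true_and] at ht
          unfold P7 at ht
          omega
      _ = ∑ t ∈ (Finset.univ.filter (fun t => ¬ P7 K t)).image (padd s), C7 K t := by
          rw [Finset.sum_image (fun x _ y _ h => padd_inj h)]
      _ ≤ ∑ t ∈ Finset.univ.filter (fun t => P7 K t), C7 K t := by
          refine Finset.sum_le_sum_of_subset ?_
          intro t' ht'
          simp only [Finset.mem_image, Finset.mem_filter, Finset.mem_univ, true_and] at ht' ⊢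
          obtain ⟨t, hnt, rfl⟩ := ht'
          exact (P7_or K t).resolve_left hnt
  have hA64 : 64 ≤ A.card := by omega
  obtain ⟨A64, hsub, hc64⟩ := Finset.exists_subset_card_eq hA64
  have hadjpr : ∀ u ∈ A64, ∀ v ∈ A64, u ≠ v →
      (kellerGraph 6 s).Adj (pr7 u) (pr7 v) := by
    intro u hu v hv huv
    have huA := hsub hu
    have hvA := hsub hv
    rw [hA, Finset.mem_filter] at huA hvA
    have huK : u ∈ K := huA.1
    have hvK : v ∈ K := hvA.1
    have hPu : P7 K (u 0) := huA.2
    have hPv : P7 K (v 0) := hvA.2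
    have hadj := hK.1 (Finset.mem_coe.mpr huK) (Finset.mem_coe.mpr hvK) huv
    rw [keller_adj] at hadj
    obtain ⟨⟨i0, hi0⟩, i1, j1, hne, hd1, hd2⟩ := hadj
    have h0 : ¬ (v 0 = padd s (u 0)) := fun h => P7_not_both K (u 0) ⟨hPu, h ▸ hPv⟩
    have hi0ne : i0 ≠ 0 := by
      rintro rfl; exact h0 ((sdiff_iff _ _).1 hi0)
    rw [keller_adj]
    have hvi0 : v i0 = padd s (u i0) := (sdiff_iff _ _).1 hi0
    refine ⟨⟨i0.pred hi0ne, ?_⟩, ?_⟩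
    · simp only [pr7, Fin.succ_pred]
      exact hi0
    · by_cases h00 : u 0 = v 0
      · have hi1 : i1 ≠ 0 := by rintro rfl; exact hd1 h00
        have hj1 : j1 ≠ 0 := by rintro rfl; exact hd2 h00
        refine ⟨i1.pred hi1, j1.pred hj1, ?_, ?_, ?_⟩
        · intro h
          apply hne
          rw [← Fin.succ_pred i1 hi1, ← Fin.succ_pred j1 hj1, h]
        · simp only [pr7, Fin.succ_pred]; exact hd1
        · simp only [pr7, Fin.succ_pred]; exact hd2
      · obtain ⟨k, hki, hk0, hvk⟩ :=
          Hc u huK v hvK i0 0 hi0ne hvi0 (fun h => h00 h.symm) h0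
        have hui0 : u i0 ≠ v i0 := by
          rw [hvi0]; exact (padd_ne (by omega) (u i0)).symm
        refine ⟨i0.pred hi0ne, k.pred hk0, ?_, ?_, ?_⟩
        · intro h
          apply hki
          rw [← Fin.succ_pred k hk0, ← Fin.succ_pred i0 hi0ne, h]
        · simp only [pr7, Fin.succ_pred]; exact hui0
        · simp only [pr7, Fin.succ_pred]; exact fun h => hvk h.symm
  refine h6 (A64.image (fun w => pr7 w)) ⟨?_, ?_⟩
  · rintro x hx y hy hxy
    obtain ⟨a, ha, rfl⟩ := Finset.mem_image.1 (Finset.mem_coe.1 hx)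
    obtain ⟨b, hb, rfl⟩ := Finset.mem_image.1 (Finset.mem_coe.1 hy)
    have hab : a ≠ b := fun h => hxy (by rw [h])
    exact hadjpr a ha b hb hab
  · rw [Finset.card_image_of_injOn, hc64]
    intro a ha b hb hab
    by_contra hne
    exact (hadjpr a ha b hb hne).ne hab

end KP2


open KellerPf in
/-- If `G_{6,s}` has no clique of size 64 and `G_{7,s}` (`s ≥ 2`) has a clique of
size 128, then it has one containing `(0,0,0,0,0,0,0)` and `(s,1,0,0,0,0,0)`. -/
theorem keller_clique_two_vertices (s : ℕ) (hs : 2 ≤ s)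
    (h6 : ∀ K : Finset (Fin 6 → Fin (2 * s)), ¬ (kellerGraph 6 s).IsNClique 64 K)
    (h7 : ∃ K : Finset (Fin 7 → Fin (2 * s)), (kellerGraph 7 s).IsNClique 128 K) :
    ∃ K : Finset (Fin 7 → Fin (2 * s)), (kellerGraph 7 s).IsNClique 128 K ∧
      (fun _ => (⟨0, by omega⟩ : Fin (2 * s))) ∈ K ∧
      (![⟨s, by omega⟩, ⟨1, by omega⟩, ⟨0, by omega⟩, ⟨0, by omega⟩,
         ⟨0, by omega⟩, ⟨0, by omega⟩, ⟨0, by omega⟩] : Fin 7 → Fin (2 * s)) ∈ K := by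
  classical
  obtain ⟨K, hK⟩ := h7
  obtain ⟨u, hu, v, hv, i, j, hij, hvi, hvj_ne, hvj_ns, heq⟩ :=
    KP2.exists_good_pair s hs h6 K hK
  have h2s : 0 < 2*s := by omega
  have h1s : 1 < 2*s := by omega
  have hss : s < 2*s := by omega
  set tgt : Fin 7 → Fin (2*s) :=
    ![⟨s, by omega⟩, ⟨1, by omega⟩, ⟨0, by omega⟩, ⟨0, by omega⟩,
      ⟨0, by omega⟩, ⟨0, by omega⟩, ⟨0, by omega⟩] with htgt
  set d := sub' (v j) (u j) with hd
  have hd0 : (d:ℕ) ≠ 0 := by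
    intro h
    apply hvj_ne
    apply sub'_inj (c := u j)
    rw [← hd, sub'_self (u j) h2s]
    exact Fin.ext h
  have hds : (d:ℕ) ≠ s := by
    intro h
    apply hvj_ns
    apply sub'_inj (c := u j)
    rw [← hd, sub'_padd_self (u j) hss]
    exact Fin.ext h
  have hj' : (Equiv.swap (0:Fin 7) i) j ≠ 0 := by
    intro h
    have h2 := congrArg (Equiv.swap (0:Fin 7) i) h
    rw [Equiv.swap_apply_self, Equiv.swap_apply_left] at h2
    exact hij h2.symm
  set σ : Equiv.Perm (Fin 7) :=
    (Equiv.swap (1:Fin 7) ((Equiv.swap (0:Fin 7) i) j)).trans (Equiv.swap (0:Fin 7) i) with hσ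
  have hσ0 : σ 0 = i := by
    rw [hσ]
    simp only [Equiv.trans_apply]
    rw [Equiv.swap_apply_of_ne_of_ne (by decide) (Ne.symm hj'), Equiv.swap_apply_left]
  have hσ1 : σ 1 = j := by
    rw [hσ]
    simp only [Equiv.trans_apply]
    rw [Equiv.swap_apply_left, Equiv.swap_apply_self]
  set oneF : Fin (2*s) := ⟨1, h1s⟩ with honeF
  set g : Fin 7 → Fin (2*s) → Fin (2*s) :=
    fun k x => if k = j then tau s d oneF (sub' x (u k)) else sub' x (u k) with hg
  set Φ : (Fin 7 → Fin (2*s)) → (Fin 7 → Fin (2*s)) := fun w m => g (σ m) (w (σ m)) with hΦ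
  have g_inj : ∀ k, Function.Injective (g k) := by
    intro k x y hxy
    simp only [hg] at hxy
    split_ifs at hxy with hk
    · exact sub'_inj (tau_inj d oneF hxy)
    · exact sub'_inj hxy
  have g_padd : ∀ k x, g k (padd s x) = padd s (g k x) := by
    intro k x
    simp only [hg]
    split_ifs with hk
    · rw [sub'_padd, tau_padd]
    · rw [sub'_padd]
  have hadj : ∀ a b, (kellerGraph 7 s).Adj a b → (kellerGraph 7 s).Adj (Φ a) (Φ b) := by
    intro a b hab
    rw [keller_adj] at hab ⊢
    obtain ⟨⟨i0, h0⟩, i1, j1, hne, h1, h2⟩ := hab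
    have hb0 : b i0 = padd s (a i0) := (sdiff_iff _ _).1 h0
    refine ⟨⟨σ.symm i0, ?_⟩, σ.symm i1, σ.symm j1, fun h => hne (σ.symm.injective h), ?_, ?_⟩
    · apply (sdiff_iff _ _).2
      simp only [hΦ, Equiv.apply_symm_apply]
      rw [hb0, g_padd]
    · simp only [hΦ, Equiv.apply_symm_apply]
      exact fun h => h1 (g_inj i1 h)
    · simp only [hΦ, Equiv.apply_symm_apply]
      exact fun h => h2 (g_inj j1 h)
  have hΦinj : Function.Injective Φ := by
    intro a b h
    funext k
    have h2 := congrFun h (σ.symm k)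
    simp only [hΦ, Equiv.apply_symm_apply] at h2
    exact g_inj k h2
  refine ⟨K.image Φ, ⟨?_, ?_⟩, ?_, ?_⟩
  · rintro x hx y hy hxy
    obtain ⟨a, ha, rfl⟩ := Finset.mem_image.1 (Finset.mem_coe.1 hx)
    obtain ⟨b, hb, rfl⟩ := Finset.mem_image.1 (Finset.mem_coe.1 hy)
    exact hadj a b (hK.1 (Finset.mem_coe.mpr ha) (Finset.mem_coe.mpr hb)
      (fun h => hxy (congrArg Φ h)))
  · rw [Finset.card_image_of_injective _ hΦinj]
    exact hK.2
  · have hΦu : Φ u = (fun _ => (⟨0, by omega⟩ : Fin (2*s))) := by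
      funext m
      simp only [hΦ, hg]
      split_ifs with hk
      · rw [sub'_self _ h2s, honeF]
        exact tau_zero hs d hd0 hds h1s h2s
      · rw [sub'_self _ h2s]
    rw [← hΦu]
    exact Finset.mem_image_of_mem Φ hu
  · have hΦv : Φ v = tgt := by
      funext m
      rcases eq_or_ne m 0 with rfl | hm0
      · have hT : tgt 0 = ⟨s, hss⟩ := by rw [htgt]; rfl
        rw [hT]
        simp only [hΦ]
        rw [hσ0]
        simp only [hg]
        rw [if_neg hij, hvi, sub'_padd_self (u i) hss]
      · rcases eq_or_ne m 1 with rfl | hm1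
        · have hT : tgt 1 = ⟨1, h1s⟩ := by rw [htgt]; rfl
          rw [hT]
          simp only [hΦ]
          rw [hσ1]
          simp only [hg]
          rw [if_pos trivial, ← hd, honeF]
          exact tau_fst d oneF
        · have hσi : σ m ≠ i := fun h => hm0 (σ.injective (h.trans hσ0.symm))
          have hσj : σ m ≠ j := fun h => hm1 (σ.injective (h.trans hσ1.symm))
          have hT : tgt m = ⟨0, h2s⟩ := by
            rw [htgt]
            fin_cases m
            · exact absurd rfl hm0
            · exact absurd rfl hm1
            all_goals rfl
          rw [hT]
          simp only [hΦ, hg]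
          rw [if_neg hσj, heq (σ m) hσi hσj, sub'_self _ h2s]
    rw [← hΦv]
    exact Finset.mem_image_of_mem Φ hv
end

section
/- For all d ≥ 1 and s ≥ 1, the Keller graph G_{d,s} has a clique of size 2^d if and only if there exists a faceshare-free s-discrete periodic cube tiling of ℝ^d. -/
/-- The half-open unit cube `[x_1, x_1+1) × ⋯ × [x_d, x_d+1)` with corner `x`. -/
def cube (d : ℕ) (x : Fin d → ℝ) : Set (Fin d → ℝ) :=
  {y | ∀ i, x i ≤ y i ∧ y i < x i + 1}

/-- `T` is a cube tiling of `ℝ^d`: the cubes with corners in `T` are pairwise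
disjoint and their union is all of `ℝ^d`. -/
def IsTiling (d : ℕ) (T : Set (Fin d → ℝ)) : Prop :=
  (T.Pairwise fun t t' => Disjoint (cube d t) (cube d t')) ∧
  (⋃ t ∈ T, cube d t) = Set.univ

/-- The `i`-th standard basis vector of `ℝ^d`. -/
def stdBasis (d : ℕ) (i : Fin d) : Fin d → ℝ := fun j => if j = i then 1 else 0

/-- Two cubes (given by their corners `x`, `y`) faceshare if `y = x ± e_i`
for some standard basis vector `e_i`. -/
def Faceshare (d : ℕ) (x y : Fin d → ℝ) : Prop :=
  ∃ i : Fin d, y = x + stdBasis d i ∨ y = x - stdBasis d i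

/-- A tiling is faceshare-free if no two distinct cubes of it faceshare. -/
def FaceshareFree (d : ℕ) (T : Set (Fin d → ℝ)) : Prop :=
  ∀ t ∈ T, ∀ t' ∈ T, t ≠ t' → ¬ Faceshare d t t'

/-- A tiling `T` is periodic if `t + 2z ∈ T` for every `t ∈ T` and `z ∈ ℤ^d`. -/
def PeriodicTiling (d : ℕ) (T : Set (Fin d → ℝ)) : Prop :=
  ∀ t ∈ T, ∀ z : Fin d → ℤ, (fun j => t j + 2 * (z j : ℝ)) ∈ T

/-- A tiling is `s`-discrete if for each coordinate `i`, the values `t i` modulo 1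
over `t ∈ T` take at most `s` distinct values. -/
def SDiscrete (d s : ℕ) (T : Set (Fin d → ℝ)) : Prop :=
  ∀ i : Fin d, ∃ S : Finset ℝ, S.card ≤ s ∧ ∀ t ∈ T, Int.fract (t i) ∈ S

section Helpers

/-- Index of a real in a finite set, as a natural number `< S.card`. -/
noncomputable def gidx (S : Finset ℝ) (x : ℝ) : ℕ :=
  if hx : x ∈ S then (S.equivFin ⟨x, hx⟩ : ℕ) else 0

lemma gidx_lt {s : ℕ} (hs : 1 ≤ s) {S : Finset ℝ} (hS : S.card ≤ s) (x : ℝ) :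
    gidx S x < s := by
  unfold gidx
  split
  · exact lt_of_lt_of_le (Fin.is_lt _) hS
  · omega

lemma gidx_injOn {S : Finset ℝ} {x y : ℝ} (hx : x ∈ S) (hy : y ∈ S)
    (h : gidx S x = gidx S y) : x = y := by
  unfold gidx at h
  rw [dif_pos hx, dif_pos hy] at h
  have h2 : S.equivFin ⟨x, hx⟩ = S.equivFin ⟨y, hy⟩ := Fin.ext h
  have := S.equivFin.injective h2
  simpa using congrArg Subtype.val this

/-- Parity of the floor. -/
noncomputable def par (u : ℝ) : ℕ := (⌊u⌋ % 2).toNat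

lemma par_le_one (u : ℝ) : par u ≤ 1 := by unfold par; omega

lemma emod2_iff (u v : ℝ) :
    (∃ m : ℤ, v = u + 2 * m) ↔ Int.fract u = Int.fract v ∧ par u = par v := by
  constructor
  · rintro ⟨m, rfl⟩
    have h1 : u + 2 * (m : ℝ) = u + ((2 * m : ℤ) : ℝ) := by push_cast; ring
    constructor
    · rw [h1, Int.fract_add_intCast]
    · unfold par
      rw [h1, Int.floor_add_intCast]
      omega
  · rintro ⟨h1, h2⟩
    unfold par at h2
    have h3 : ∃ m : ℤ, ⌊v⌋ - ⌊u⌋ = 2 * m := ⟨(⌊v⌋ - ⌊u⌋) / 2, by omega⟩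
    obtain ⟨m, hm⟩ := h3
    refine ⟨m, ?_⟩
    have hu := Int.floor_add_fract u
    have hv := Int.floor_add_fract v
    have : ((⌊v⌋ : ℝ)) = ⌊u⌋ + 2 * m := by exact_mod_cast congrArg (Int.cast : ℤ → ℝ) (by omega : ⌊v⌋ = ⌊u⌋ + 2 * m)
    linarith [this, hu, hv, h1.symm ▸ (rfl : Int.fract v = Int.fract v)]

lemma odd_step {u v : ℝ} {m : ℤ} (h : v = u + (2 * (m : ℝ) + 1)) :
    Int.fract u = Int.fract v ∧ par u + par v = 1 := by
  have h1 : v = u + ((2 * m + 1 : ℤ) : ℝ) := by rw [h]; push_cast; ring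
  constructor
  · rw [h1, Int.fract_add_intCast]
  · unfold par
    rw [h1, Int.floor_add_intCast]
    omega

lemma cube_disjoint_of_coord {d : ℕ} {x x' : Fin d → ℝ} (i : Fin d)
    (h : 1 ≤ |x i - x' i|) : Disjoint (cube d x) (cube d x') := by
  rw [Set.disjoint_left]
  intro y hy hy'
  have h1 := hy i
  have h2 := hy' i
  rcases le_abs.mp h with h3 | h3 <;>
    linarith [h1.1, h1.2, h2.1, h2.2]

lemma cube_not_disjoint {d : ℕ} {x x' : Fin d → ℝ} (h : ∀ i, |x i - x' i| < 1) :
    ¬ Disjoint (cube d x) (cube d x') := by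
  rw [Set.not_disjoint_iff]
  refine ⟨fun i => max (x i) (x' i), fun i => ⟨le_max_left _ _, ?_⟩, fun i => ⟨le_max_right _ _, ?_⟩⟩
  · rcases abs_lt.mp (h i) with ⟨h1, h2⟩
    exact max_lt (by linarith) (by linarith)
  · rcases abs_lt.mp (h i) with ⟨h1, h2⟩
    exact max_lt (by linarith) (by linarith)

lemma one_le_abs_real {n : ℤ} (h : n ≠ 0) : (1 : ℝ) ≤ |(n : ℝ)| := by
  have : (1 : ℤ) ≤ |n| := Int.one_le_abs (by omega)
  calc (1:ℝ) ≤ ((|n| : ℤ) : ℝ) := by exact_mod_cast this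
    _ = |(n : ℝ)| := by push_cast; rfl

end Helpers

lemma exists_odd_coord {d : ℕ} {T : Set (Fin d → ℝ)}
    (hpair : T.Pairwise fun t t' => Disjoint (cube d t) (cube d t'))
    (hper : PeriodicTiling d T) {t t' : Fin d → ℝ} (ht : t ∈ T) (ht' : t' ∈ T)
    (hne : ∀ z : Fin d → ℤ, (fun j => t' j + 2 * (z j : ℝ)) ≠ t) :
    ∃ (i : Fin d) (m : ℤ), t' i = t i + (2 * (m : ℝ) + 1) := by
  by_contra hcon
  push_neg at hcon
  set z : Fin d → ℤ := fun i => -round ((t' i - t i) / 2) with hz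
  have key : ∀ i, |(t' i + 2 * (z i : ℝ)) - t i| < 1 := by
    intro i
    set r : ℝ := t' i - t i with hr
    set k : ℤ := round (r / 2) with hk
    have h1 : |r / 2 - k| ≤ 1 / 2 := abs_sub_round _
    have h2 : |r - 2 * k| ≤ 1 := by
      have : r - 2 * k = 2 * (r / 2 - k) := by ring
      rw [this, abs_mul, abs_two]; linarith
    have h3 : |r - 2 * k| ≠ 1 := by
      intro habs
      rcases abs_eq (by norm_num : (0:ℝ) ≤ 1) |>.mp habs with h4 | h4
      · exact hcon i k (by push_cast; linarith)
      · exact hcon i (k - 1) (by push_cast; linarith)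
    have : (t' i + 2 * (z i : ℝ)) - t i = r - 2 * k := by
      simp only [hz]; push_cast; ring
    rw [this]
    exact lt_of_le_of_ne h2 h3
  have ht'' : (fun j => t' j + 2 * (z j : ℝ)) ∈ T := hper t' ht' z
  have hdisj := hpair ht'' ht (hne z)
  exact cube_not_disjoint key hdisj

noncomputable def encfun {d s : ℕ} (hs : 1 ≤ s) (S : Fin d → Finset ℝ)
    (hS : ∀ i, (S i).card ≤ s) (t : Fin d → ℝ) (i : Fin d) : Fin (2 * s) :=
  ⟨gidx (S i) (Int.fract (t i)) + s * par (t i), by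
    have h1 := gidx_lt hs (hS i) (Int.fract (t i))
    have h2 : s * par (t i) ≤ s * 1 := Nat.mul_le_mul_left s (par_le_one (t i))
    omega⟩

lemma encfun_val {d s : ℕ} (hs : 1 ≤ s) (S : Fin d → Finset ℝ)
    (hS : ∀ i, (S i).card ≤ s) (t : Fin d → ℝ) (i : Fin d) :
    (encfun hs S hS t i : ℕ) = gidx (S i) (Int.fract (t i)) + s * par (t i) := rfl

lemma tiling_to_clique (d s : ℕ) (hs : 1 ≤ s) (T : Set (Fin d → ℝ))
    (htil : IsTiling d T) (hff : FaceshareFree d T) (hper : PeriodicTiling d T)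
    (hdis : SDiscrete d s T) :
    ∃ K : Finset (Fin d → Fin (2 * s)), (kellerGraph d s).IsNClique (2 ^ d) K := by
  classical
  choose S hScard hSmem using hdis
  -- pick a cube covering each vertex of {0,1}^d
  have hcover : ∀ v : Fin d → Bool,
      ∃ t, t ∈ T ∧ (fun i => if v i then (1:ℝ) else 0) ∈ cube d t := by
    intro v
    have hmem : (fun i => if v i then (1:ℝ) else 0) ∈ ⋃ t ∈ T, cube d t := by
      rw [htil.2]; exact Set.mem_univ _
    simpa using hmem
  choose tv htvT htv using hcover
  have hfr : ∀ v i, Int.fract (tv v i) ∈ S i := fun v i => hSmem i _ (htvT v)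
  -- if two chosen cubes agree mod 2 in coordinate i, the bool vectors agree at i
  have hkey : ∀ v w : Fin d → Bool, ∀ i, (∃ m : ℤ, tv w i = tv v i + 2 * m) → v i = w i := by
    rintro v w i ⟨m, hm⟩
    by_contra hne
    have h1 : tv v i ≤ (if v i then (1:ℝ) else 0) ∧ (if v i then (1:ℝ) else 0) < tv v i + 1 :=
      htv v i
    have h2 : tv w i ≤ (if w i then (1:ℝ) else 0) ∧ (if w i then (1:ℝ) else 0) < tv w i + 1 :=
      htv w i
    cases hvi : v i <;> cases hwi : w i <;> rw [hvi] at h1 <;> rw [hwi] at h2 <;>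
      simp only [Bool.false_eq_true, if_true, if_false] at h1 h2
    · exact hne (hvi.trans hwi.symm)
    · -- v i = false, w i = true : 0 < m < 1
      have hm1 : (0:ℝ) < m := by linarith [h1.1, h1.2, h2.1, h2.2, hm]
      have hm2 : (m:ℝ) < 1 := by linarith [h1.1, h1.2, h2.1, h2.2, hm]
      have : (0:ℤ) < m := by exact_mod_cast hm1
      have : m < 1 := by exact_mod_cast hm2
      omega
    · have hm1 : (m:ℝ) < 0 := by linarith [h1.1, h1.2, h2.1, h2.2, hm]
      have hm2 : (-1:ℝ) < m := by linarith [h1.1, h1.2, h2.1, h2.2, hm]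
      have : m < 0 := by exact_mod_cast hm1
      have : (-1:ℤ) < m := by exact_mod_cast hm2
      omega
    · exact hne (hvi.trans hwi.symm)
  -- the encoding
  set enc : (Fin d → Bool) → (Fin d → Fin (2 * s)) := fun v => encfun hs S hScard (tv v)
    with henc
  have hE1 : ∀ v w : Fin d → Bool, ∀ i, enc v i = enc w i →
      ∃ m : ℤ, tv w i = tv v i + 2 * m := by
    intro v w i h
    have h' : gidx (S i) (Int.fract (tv v i)) + s * par (tv v i)
        = gidx (S i) (Int.fract (tv w i)) + s * par (tv w i) := congrArg Fin.val h
    have g1 := gidx_lt hs (hScard i) (Int.fract (tv v i))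
    have g2 := gidx_lt hs (hScard i) (Int.fract (tv w i))
    have p1 := par_le_one (tv v i)
    have p2 := par_le_one (tv w i)
    have hpar : par (tv v i) = par (tv w i) := by
      rcases Nat.le_one_iff_eq_zero_or_eq_one.mp p1 with hp | hp <;>
        rcases Nat.le_one_iff_eq_zero_or_eq_one.mp p2 with hq | hq <;>
        rw [hp, hq] at h' ⊢ <;> simp only [Nat.mul_zero, Nat.mul_one] at h' <;> omega
    have hgi : gidx (S i) (Int.fract (tv v i)) = gidx (S i) (Int.fract (tv w i)) := by
      rw [hpar] at h'; omega
    exact (emod2_iff _ _).mpr ⟨gidx_injOn (hfr v i) (hfr w i) hgi, hpar⟩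
  have hE1' : ∀ v w : Fin d → Bool, ∀ i, (∃ m : ℤ, tv w i = tv v i + 2 * m) →
      enc v i = enc w i := by
    intro v w i h
    obtain ⟨hf, hp⟩ := (emod2_iff _ _).mp h
    apply Fin.ext
    rw [encfun_val, encfun_val, hf, hp]
  have hE2 : ∀ v w : Fin d → Bool, ∀ i, ∀ m : ℤ, tv w i = tv v i + (2 * (m:ℝ) + 1) →
      ((enc v i : ℕ) + s = (enc w i : ℕ) ∨ (enc w i : ℕ) + s = (enc v i : ℕ)) := by
    intro v w i m hm
    obtain ⟨hf, hp⟩ := odd_step hm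
    rw [encfun_val, encfun_val, hf]
    rcases (by omega : par (tv v i) = 0 ∧ par (tv w i) = 1 ∨
        par (tv v i) = 1 ∧ par (tv w i) = 0) with ⟨ha, hb⟩ | ⟨ha, hb⟩ <;>
      rw [ha, hb] <;> simp [Nat.mul_zero, Nat.mul_one] <;> omega
  have hencinj : Function.Injective enc := by
    intro v w h
    funext i
    exact hkey v w i (hE1 v w i (congrFun h i))
  refine ⟨Finset.image enc Finset.univ, ?_, ?_⟩
  · -- clique
    intro x hx y hy hxy
    simp only [Finset.coe_image, Finset.coe_univ, Set.image_univ, Set.mem_range] at hx hy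
    obtain ⟨v, rfl⟩ := hx
    obtain ⟨w, rfl⟩ := hy
    obtain ⟨i₁, hi₁⟩ := Function.ne_iff.mp hxy
    have hnotm : ¬ ∃ m : ℤ, tv w i₁ = tv v i₁ + 2 * m := fun h => hi₁ (hE1' v w i₁ h)
    have hdiffz : ∀ z : Fin d → ℤ, (fun j => tv w j + 2 * (z j : ℝ)) ≠ tv v := by
      intro z hzeq
      exact hnotm ⟨-(z i₁), by
        have := congrFun hzeq i₁
        push_cast
        linarith⟩
    obtain ⟨i₀, m, hm⟩ := exists_odd_coord htil.1 hper (htvT v) (htvT w) hdiffz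
    refine ⟨⟨i₀, hE2 v w i₀ m hm⟩, ?_⟩
    by_contra h2
    push_neg at h2
    have hx0 : enc v i₀ ≠ enc w i₀ := by
      intro he
      obtain ⟨c, hc⟩ := hE1 v w i₀ he
      have hcr : (2 * c : ℝ) = 2 * (m:ℝ) + 1 := by linarith [hm, hc]
      have : (2 * c : ℤ) = 2 * m + 1 := by exact_mod_cast hcr
      omega
    have hall : ∀ j, ∃ c : ℤ, j ≠ i₀ → tv w j = tv v j + 2 * c := by
      intro j
      by_cases hj : j = i₀
      · exact ⟨0, fun h => absurd hj h⟩
      · obtain ⟨c, hc⟩ := hE1 v w j (h2 i₀ j (Ne.symm hj) hx0)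
        exact ⟨c, fun _ => hc⟩
    choose c hc using hall
    set z : Fin d → ℤ := fun j => if j = i₀ then -m else -(c j) with hz
    have ht'' : (fun j => tv w j + 2 * (z j : ℝ)) ∈ T := hper _ (htvT w) z
    have heq : (fun j => tv w j + 2 * (z j : ℝ)) = tv v + stdBasis d i₀ := by
      funext j
      simp only [hz, Pi.add_apply, stdBasis]
      by_cases hj : j = i₀
      · subst hj
        rw [if_pos rfl, if_pos rfl]
        push_cast
        linarith [hm]
      · rw [if_neg hj, if_neg hj]
        push_cast
        linarith [hc j hj]
    have hne'' : tv v ≠ (fun j => tv w j + 2 * (z j : ℝ)) := by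
      intro h
      have h3 := congrFun (h.trans heq) i₀
      simp only [Pi.add_apply, stdBasis, if_pos rfl, if_true] at h3
      linarith
    exact hff (tv v) (htvT v) _ ht'' hne'' ⟨i₀, Or.inl heq⟩
  · -- cardinality
    rw [Finset.card_image_of_injective _ hencinj, Finset.card_univ]
    simp

lemma clique_to_tiling (d s : ℕ) (hs : 1 ≤ s) (K : Finset (Fin d → Fin (2 * s)))
    (hK : (kellerGraph d s).IsNClique (2 ^ d) K) :
    ∃ T : Set (Fin d → ℝ),
      IsTiling d T ∧ FaceshareFree d T ∧ PeriodicTiling d T ∧ SDiscrete d s T := by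
  classical
  have hs0 : (s : ℝ) ≠ 0 := Nat.cast_ne_zero.mpr (by omega)
  have hsR : (0 : ℝ) < s := by
    have : (0:ℕ) < s := by omega
    exact_mod_cast this
  set T : Set (Fin d → ℝ) :=
    {t | ∃ k ∈ K, ∃ z : Fin d → ℤ, ∀ i, t i = ((k i : ℕ) : ℝ) / s + 2 * (z i : ℝ)} with hT
  have hstep : ∀ a b : Fin (2 * s), (a : ℕ) + s = (b : ℕ) →
      ((b : ℕ) : ℝ) / s = ((a : ℕ) : ℝ) / s + 1 := by
    intro a b h
    have hb : ((b : ℕ) : ℝ) = ((a : ℕ) : ℝ) + s := by exact_mod_cast h.symm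
    rw [hb]
    field_simp
  have hadj := hK.1
  -- pairwise disjointness
  have hpair : T.Pairwise fun t t' => Disjoint (cube d t) (cube d t') := by
    rintro t ht t' ht' htne
    obtain ⟨k, hk, z, hzeq⟩ := ht
    obtain ⟨k', hk', z', hzeq'⟩ := ht'
    by_cases hkk : k = k'
    · subst hkk
      have hzne : ∃ i, z i ≠ z' i := by
        by_contra h
        push_neg at h
        exact htne (funext fun i => by rw [hzeq i, hzeq' i, h i])
      obtain ⟨i, hi⟩ := hzne
      apply cube_disjoint_of_coord i
      have hdiff : t i - t' i = ((2 * (z i - z' i) : ℤ) : ℝ) := by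
        rw [hzeq i, hzeq' i]; push_cast; ring
      rw [hdiff]
      exact one_le_abs_real (by omega)
    · obtain ⟨⟨i, hi⟩, -⟩ := hadj (Finset.mem_coe.mpr hk) (Finset.mem_coe.mpr hk') hkk
      apply cube_disjoint_of_coord i
      rcases hi with hi | hi
      · have hdiff : t i - t' i = ((2 * (z i - z' i) - 1 : ℤ) : ℝ) := by
          rw [hzeq i, hzeq' i, hstep _ _ hi]; push_cast; ring
        rw [hdiff]
        exact one_le_abs_real (by omega)
      · have hdiff : t i - t' i = ((2 * (z i - z' i) + 1 : ℤ) : ℝ) := by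
          rw [hzeq i, hzeq' i, hstep _ _ hi]; push_cast; ring
        rw [hdiff]
        exact one_le_abs_real (by omega)
  refine ⟨T, ⟨hpair, ?_⟩, ?_, ?_, ?_⟩
  · -- covering
    rw [Set.eq_univ_iff_forall]
    intro y
    simp only [Set.mem_iUnion]
    set f : (Fin d → Fin (2 * s)) → (Fin d → Bool) :=
      fun k i => decide (Even ⌊y i - ((k i : ℕ) : ℝ) / s⌋) with hf
    have hflip : ∀ k k' : Fin d → Fin (2 * s), ∀ i, (k i : ℕ) + s = (k' i : ℕ) →
        (Even ⌊y i - ((k' i : ℕ) : ℝ) / s⌋ ↔ ¬ Even ⌊y i - ((k i : ℕ) : ℝ) / s⌋) := by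
      intro k k' i h
      rw [hstep _ _ h]
      have h2 : y i - (((k i : ℕ) : ℝ) / s + 1) = (y i - ((k i : ℕ) : ℝ) / s) - ((1 : ℤ) : ℝ) := by
        push_cast; ring
      rw [h2, Int.floor_sub_intCast]
      exact Int.even_sub_one
    have hinj : Set.InjOn f K := by
      intro k hk k' hk' hfeq
      by_contra hne
      obtain ⟨⟨i, hi⟩, -⟩ := hadj hk hk' hne
      have hfi : Even ⌊y i - ((k i : ℕ) : ℝ) / s⌋ ↔ Even ⌊y i - ((k' i : ℕ) : ℝ) / s⌋ :=
        decide_eq_decide.mp (congrFun hfeq i)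
      rcases hi with hi | hi
      · have := hflip k k' i hi
        tauto
      · have := hflip k' k i hi
        tauto
    have hcard : (Finset.image f K).card = Fintype.card (Fin d → Bool) := by
      rw [Finset.card_image_of_injOn hinj, hK.2]
      simp
    have himg : Finset.image f K = Finset.univ := Finset.eq_univ_of_card _ hcard
    have hmem : (fun _ => true) ∈ Finset.image f K := by rw [himg]; exact Finset.mem_univ _
    obtain ⟨k, hk, hfk⟩ := Finset.mem_image.mp hmem
    have heven : ∀ i, Even ⌊y i - ((k i : ℕ) : ℝ) / s⌋ := by
      intro i
      have := congrFun hfk i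
      simp only [hf] at this
      exact of_decide_eq_true this
    choose m hm using heven
    refine ⟨fun i => ((k i : ℕ) : ℝ) / s + 2 * (m i : ℝ), ⟨k, hk, m, fun i => rfl⟩, ?_⟩
    simp only [cube, Set.mem_setOf_eq]
    intro i
    have hfl : (⌊y i - ((k i : ℕ) : ℝ) / s⌋ : ℤ) = 2 * m i := by
      have := hm i; omega
    have h1 : ((⌊y i - ((k i : ℕ) : ℝ) / s⌋ : ℤ) : ℝ) ≤ y i - ((k i : ℕ) : ℝ) / s :=
      Int.floor_le _
    have h2 : y i - ((k i : ℕ) : ℝ) / s < (⌊y i - ((k i : ℕ) : ℝ) / s⌋ : ℤ) + 1 :=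
      Int.lt_floor_add_one _
    rw [hfl] at h1 h2
    push_cast at h1 h2
    constructor <;> linarith
  · -- faceshare-free
    rintro t ht t' ht' htne ⟨i₀, hface⟩
    obtain ⟨k, hk, z, hzeq⟩ := ht
    obtain ⟨k', hk', z', hzeq'⟩ := ht'
    have hco : ∀ j, j ≠ i₀ → t' j = t j := by
      intro j hj
      rcases hface with hface | hface <;> rw [hface] <;>
        simp [stdBasis, hj]
    have hci : t' i₀ = t i₀ + 1 ∨ t' i₀ = t i₀ - 1 := by
      rcases hface with hface | hface <;> rw [hface] <;>
        simp [stdBasis]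
    have hkeq : ∀ j, j ≠ i₀ → k j = k' j := by
      intro j hj
      have he : ((k' j : ℕ) : ℝ) / s + 2 * (z' j : ℝ) = ((k j : ℕ) : ℝ) / s + 2 * (z j : ℝ) := by
        rw [← hzeq j, ← hzeq' j, hco j hj]
      have h1 : ((k' j : ℕ) : ℝ) = ((k j : ℕ) : ℝ) + 2 * ((z j - z' j : ℤ) : ℝ) * s := by
        field_simp at he
        push_cast
        linarith
      have hb1 : ((k j : ℕ) : ℝ) < 2 * s := by
        have := (k j).is_lt
        exact_mod_cast this
      have hb2 : ((k' j : ℕ) : ℝ) < 2 * s := by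
        have := (k' j).is_lt
        exact_mod_cast this
      have hn1 : (0:ℝ) ≤ ((k j : ℕ) : ℝ) := Nat.cast_nonneg _
      have hn2 : (0:ℝ) ≤ ((k' j : ℕ) : ℝ) := Nat.cast_nonneg _
      have hq1 : ((z j - z' j : ℤ) : ℝ) < 1 := by nlinarith
      have hq2 : (-1 : ℝ) < ((z j - z' j : ℤ) : ℝ) := by nlinarith
      have hq1' : (z j - z' j : ℤ) < 1 := by exact_mod_cast hq1
      have hq2' : (-1 : ℤ) < (z j - z' j : ℤ) := by exact_mod_cast hq2
      have hq0 : (z j - z' j : ℤ) = 0 := by omega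
      rw [hq0] at h1
      simp at h1
      exact Fin.ext (by exact_mod_cast h1.symm)
    by_cases hkk : k = k'
    · subst hkk
      have h1 : t' i₀ = t i₀ + ((2 * (z' i₀ - z i₀) : ℤ) : ℝ) := by
        rw [hzeq i₀, hzeq' i₀]; push_cast; ring
      rcases hci with hci | hci <;> rw [hci] at h1
      · have : ((2 * (z' i₀ - z i₀) : ℤ) : ℝ) = 1 := by linarith
        have : (2 * (z' i₀ - z i₀) : ℤ) = 1 := by exact_mod_cast this
        omega
      · have : ((2 * (z' i₀ - z i₀) : ℤ) : ℝ) = -1 := by linarith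
        have : (2 * (z' i₀ - z i₀) : ℤ) = -1 := by exact_mod_cast this
        omega
    · obtain ⟨-, j₁, j₂, hj12, hd1, hd2⟩ :=
        hadj (Finset.mem_coe.mpr hk) (Finset.mem_coe.mpr hk') hkk
      by_cases hj1 : j₁ = i₀
      · exact hd2 (hkeq j₂ (fun h => hj12 (hj1.trans h.symm)))
      · exact hd1 (hkeq j₁ hj1)
  · -- periodic
    rintro t ⟨k, hk, z, hzeq⟩ w
    exact ⟨k, hk, fun j => z j + w j, fun i => by
      show t i + 2 * ((w i : ℤ) : ℝ) = _
      rw [hzeq i]; push_cast; ring⟩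
  · -- s-discrete
    intro i
    refine ⟨(Finset.range s).image (fun r : ℕ => (r : ℝ) / s), ?_, ?_⟩
    · exact le_of_le_of_eq Finset.card_image_le (Finset.card_range s)
    · rintro t ⟨k, hk, z, hzeq⟩
      set a : ℕ := (k i : ℕ) with ha
      set r : ℕ := a % s with hr
      set q : ℕ := a / s with hq
      have hsplit : (a : ℝ) = (r : ℝ) + (q : ℝ) * s := by
        exact_mod_cast (Nat.mod_add_div' a s).symm
      have hti : t i = (r : ℝ) / s + (((q : ℤ) + 2 * z i : ℤ) : ℝ) := by
        rw [hzeq i, ← ha, hsplit]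
        push_cast
        field_simp
        ring
      have hrs : (r : ℝ) / s < 1 := by
        rw [div_lt_one hsR]
        exact_mod_cast Nat.mod_lt a (show 0 < s by omega)
      rw [hti, Int.fract_add_intCast, Int.fract_eq_self.mpr ⟨by positivity, hrs⟩]
      exact Finset.mem_image.mpr ⟨r, Finset.mem_range.mpr (Nat.mod_lt a (show 0 < s by omega)), rfl⟩

/-- For `d ≥ 1` and `s ≥ 1`, the Keller graph `G_{d,s}` has a clique of size `2^d`
iff there exists a faceshare-free `s`-discrete periodic cube tiling of `ℝ^d`. -/
theorem keller_clique_iff_discrete_periodic_tiling (d s : ℕ) (hd : 1 ≤ d) (hs : 1 ≤ s) :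
    (∃ K : Finset (Fin d → Fin (2 * s)), (kellerGraph d s).IsNClique (2 ^ d) K) ↔
    (∃ T : Set (Fin d → ℝ),
      IsTiling d T ∧ FaceshareFree d T ∧ PeriodicTiling d T ∧ SDiscrete d s T) := by
  constructor
  · rintro ⟨K, hK⟩
    exact clique_to_tiling d s hs K hK
  · rintro ⟨T, h1, h2, h3, h4⟩
    exact tiling_to_clique d s hs T h1 h2 h3 h4
end

section
/- For every d ≥ 1, there exists a faceshare-free periodic cube tiling of ℝ^d if and only if the Keller graph G_{d,s} with s = 2^{d−1} contains a clique of size 2^d. -/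
lemma not_disjoint_cube {d : ℕ} {x y : Fin d → ℝ} (h : ∀ i, |x i - y i| < 1) :
    ¬ Disjoint (cube d x) (cube d y) := by
  rw [Set.not_disjoint_iff]
  refine ⟨fun i => max (x i) (y i), fun i => ⟨le_max_left _ _, ?_⟩,
    fun i => ⟨le_max_right _ _, ?_⟩⟩
  · rcases abs_lt.1 (h i) with ⟨h1, h2⟩
    exact max_lt (by linarith) (by linarith)
  · rcases abs_lt.1 (h i) with ⟨h1, h2⟩
    exact max_lt (by linarith) (by linarith)

lemma disjoint_cube {d : ℕ} {x y : Fin d → ℝ} (i : Fin d) (h : 1 ≤ |x i - y i|) :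
    Disjoint (cube d x) (cube d y) := by
  rw [Set.disjoint_left]
  intro p hp hq
  have h1 := hp i
  have h2 := hq i
  rw [le_abs] at h
  rcases h with h | h <;> [skip; rw [le_neg] at h] <;>
    linarith [h1.1, h1.2, h2.1, h2.2]

lemma fract_flip (x : ℝ) : Int.fract (x - 1/2) < 1/2 ↔ ¬ (Int.fract x < 1/2) := by
  have h0 := Int.fract_nonneg x
  have h1 := Int.fract_lt_one x
  by_cases hx : Int.fract x < 1/2
  · have : Int.fract (x - 1/2) = Int.fract x + 1/2 := by
      rw [Int.fract_eq_iff]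
      refine ⟨by linarith, by linarith, ⟨⌊x⌋ - 1, ?_⟩⟩
      have hf : Int.fract x = x - ⌊x⌋ := rfl
      rw [hf]; push_cast; ring
    rw [this]
    constructor
    · intro hh; intro; linarith
    · intro hh; exact absurd hx hh
  · have : Int.fract (x - 1/2) = Int.fract x - 1/2 := by
      rw [Int.fract_eq_iff]
      refine ⟨by linarith, by linarith, ⟨⌊x⌋, ?_⟩⟩
      have hf : Int.fract x = x - ⌊x⌋ := rfl
      rw [hf]; ring
    rw [this]
    simp only [hx, not_false_iff, iff_true]
    linarith [not_lt.1 hx]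

lemma int_abs_ge_one {k : ℤ} (h : k ≠ 0) : (1:ℝ) ≤ |(k:ℝ)| := by
  have := Int.one_le_abs h
  calc (1:ℝ) ≤ ((|k| : ℤ) : ℝ) := by exact_mod_cast this
  _ = |(k:ℝ)| := by push_cast; ring

lemma dir1 (d s : ℕ) (h2s : 2 * s = 2 ^ d) (hspos : 0 < s)
    (K : Finset (Fin d → Fin (2 * s)))
    (hK : (kellerGraph d s).IsNClique (2 ^ d) K) :
    ∃ T : Set (Fin d → ℝ), IsTiling d T ∧ FaceshareFree d T ∧ PeriodicTiling d T := by
  have hsR : (0:ℝ) < (s:ℝ) := by exact_mod_cast hspos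
  -- the tiling
  set T : Set (Fin d → ℝ) :=
    {t | ∃ v ∈ K, ∃ z : Fin d → ℤ, ∀ i, t i = ((v i : ℕ) : ℝ) / s + 2 * z i} with hT
  -- adjacency consequences
  have hadj : ∀ v ∈ K, ∀ w ∈ K, v ≠ w →
      ∃ i, ((w i : ℕ) : ℝ) = ((v i : ℕ) : ℝ) + s ∨ ((v i : ℕ) : ℝ) = ((w i : ℕ) : ℝ) + s := by
    intro v hv w hw hvw
    obtain ⟨⟨i, hi⟩, -⟩ := hK.1 (Finset.mem_coe.2 hv) (Finset.mem_coe.2 hw) hvw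
    exact ⟨i, by rcases hi with h | h <;> [left; right] <;> exact_mod_cast h.symm⟩
  have hadj2 : ∀ v ∈ K, ∀ w ∈ K, v ≠ w →
      ∃ i j, i ≠ j ∧ v i ≠ w i ∧ v j ≠ w j := fun v hv w hw hvw =>
      (hK.1 (Finset.mem_coe.2 hv) (Finset.mem_coe.2 hw) hvw).2
  refine ⟨T, ⟨?_, ?_⟩, ?_, ?_⟩
  · -- pairwise disjoint
    rintro t ⟨v, hv, z0, ht⟩ t' ⟨w, hw, z1, ht'⟩ hne
    by_cases hvw : v = w
    · subst hvw
      have : ∃ i, z0 i ≠ z1 i := by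
        by_contra hc
        push_neg at hc
        exact hne (funext fun i => by rw [ht i, ht' i, hc i])
      obtain ⟨i, hzi⟩ := this
      refine disjoint_cube i ?_
      have : t i - t' i = ((2 * (z0 i - z1 i) : ℤ) : ℝ) := by
        rw [ht i, ht' i]; push_cast; ring
      rw [this]
      have h2 : (2 * (z0 i - z1 i) : ℤ) ≠ 0 := by
        intro hh
        apply hzi
        omega
      linarith [int_abs_ge_one h2]
    · obtain ⟨i, hi⟩ := hadj v hv w hw hvw
      refine disjoint_cube i ?_
      rcases hi with h | h
      · have : t i - t' i = ((2 * (z0 i - z1 i) - 1 : ℤ) : ℝ) := by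
          rw [ht i, ht' i, h]
          field_simp
          push_cast; ring
        rw [this]
        refine int_abs_ge_one ?_
        omega
      · have : t i - t' i = ((2 * (z0 i - z1 i) + 1 : ℤ) : ℝ) := by
          rw [ht i, ht' i, h]
          field_simp
          push_cast; ring
        rw [this]
        refine int_abs_ge_one ?_
        omega
  · -- covering
    rw [Set.eq_univ_iff_forall]
    intro y
    -- injective parity map
    set f : (Fin d → Fin (2 * s)) → (Fin d → Bool) :=
      fun v i => decide (Int.fract ((y i - ((v i : ℕ) : ℝ) / s) / 2) < 1/2) with hf
    have hinj : Set.InjOn f K := by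
      intro v hv w hw hfvw
      by_contra hvw
      obtain ⟨i, hi⟩ := hadj v hv w hw hvw
      have hcongr := congrFun hfvw i
      simp only [hf, decide_eq_decide] at hcongr
      rcases hi with h | h
      · have harg : (y i - ((w i : ℕ) : ℝ) / s) / 2
            = (y i - ((v i : ℕ) : ℝ) / s) / 2 - 1/2 := by
          rw [h]; field_simp; ring
        rw [harg] at hcongr
        rw [fract_flip] at hcongr
        tauto
      · have harg : (y i - ((v i : ℕ) : ℝ) / s) / 2
            = (y i - ((w i : ℕ) : ℝ) / s) / 2 - 1/2 := by
          rw [h]; field_simp; ring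
        rw [harg] at hcongr
        rw [fract_flip] at hcongr
        tauto
    have hcard : (K.image f).card = Fintype.card (Fin d → Bool) := by
      rw [Finset.card_image_of_injOn hinj, hK.2]
      simp [Fintype.card_fun]
    have huniv : K.image f = Finset.univ := Finset.eq_univ_of_card _ hcard
    have : (fun _ => true) ∈ K.image f := huniv ▸ Finset.mem_univ _
    obtain ⟨v, hv, hfv⟩ := Finset.mem_image.1 this
    have hvi : ∀ i, Int.fract ((y i - ((v i : ℕ) : ℝ) / s) / 2) < 1/2 := by
      intro i
      have := congrFun hfv i
      simpa [hf] using this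
    refine Set.mem_iUnion₂.2 ⟨fun i => ((v i : ℕ) : ℝ) / s + 2 * ⌊(y i - ((v i : ℕ) : ℝ) / s) / 2⌋,
      ⟨v, hv, fun i => ⌊(y i - ((v i : ℕ) : ℝ) / s) / 2⌋, fun i => rfl⟩, ?_⟩
    intro i
    have h1 := hvi i
    have h2 : Int.fract ((y i - ((v i : ℕ) : ℝ) / s) / 2)
        = (y i - ((v i : ℕ) : ℝ) / s) / 2 - ⌊(y i - ((v i : ℕ) : ℝ) / s) / 2⌋ := rfl
    have h3 := Int.fract_nonneg ((y i - ((v i : ℕ) : ℝ) / s) / 2)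
    rw [h2] at h1 h3
    constructor <;> [linarith; linarith]
  · -- faceshare-free
    rintro t ⟨v, hv, z0, ht⟩ t' ⟨w, hw, z1, ht'⟩ hne ⟨i, hface⟩
    -- first: w j = v j for j ≠ i
    have hoff : ∀ j, j ≠ i → v j = w j := by
      intro j hj
      have hcoord : t' j = t j := by
        rcases hface with h | h <;> rw [h] <;>
          simp [stdBasis, hj]
      rw [ht j, ht' j] at hcoord
      -- ((w j:ℝ))/s - v j /s = 2*(z0 j - z1 j)
      have hZ : ((w j : ℕ) : ℤ) = ((v j : ℕ) : ℤ) + 2 * s * (z0 j - z1 j) := by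
        have : ((w j : ℕ) : ℝ) = ((v j : ℕ) : ℝ) + 2 * s * ((z0 j - z1 j : ℤ) : ℝ) := by
          field_simp at hcoord ⊢
          push_cast
          push_cast at hcoord
          nlinarith [hcoord]
        exact_mod_cast this
      have hb1 : ((w j : ℕ) : ℤ) < 2 * s := by exact_mod_cast (w j).2
      have hb2 : ((v j : ℕ) : ℤ) < 2 * s := by exact_mod_cast (v j).2
      have hb3 : 0 ≤ ((w j : ℕ) : ℤ) := by positivity
      have hb4 : 0 ≤ ((v j : ℕ) : ℤ) := by positivity
      have hm : z0 j - z1 j = 0 := by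
        rcases lt_trichotomy (z0 j - z1 j) 0 with h | h | h
        · nlinarith [hZ]
        · exact h
        · nlinarith [hZ]
      have : ((w j : ℕ) : ℤ) = ((v j : ℕ) : ℤ) := by rw [hZ, hm]; ring
      have : (w j : ℕ) = (v j : ℕ) := by exact_mod_cast this
      exact (Fin.ext this).symm
    -- coordinate i : v i ≠ w i
    have hvi : v i ≠ w i := by
      have hcoord : t' i = t i + 1 ∨ t' i = t i - 1 := by
        rcases hface with h | h <;> [left; right] <;> rw [h] <;> simp [stdBasis]
      intro heq
      rcases hcoord with h | h <;> rw [ht i, ht' i, heq] at h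
      · have hZ : ((2 * (z1 i - z0 i) : ℤ) : ℝ) = 1 := by push_cast; linarith
        have : (2 * (z1 i - z0 i) : ℤ) = 1 := by exact_mod_cast hZ
        omega
      · have hZ : ((2 * (z1 i - z0 i) : ℤ) : ℝ) = -1 := by push_cast; linarith
        have : (2 * (z1 i - z0 i) : ℤ) = -1 := by exact_mod_cast hZ
        omega
    have hvw : v ≠ w := fun h => hvi (congrFun h i)
    obtain ⟨j, j', hne', hj, hj'⟩ := hadj2 v hv w hw hvw
    have hji : j = i := by
      by_contra hc
      exact hj (hoff j hc)
    have hji' : j' = i := by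
      by_contra hc
      exact hj' (hoff j' hc)
    exact hne' (hji.trans hji'.symm)
  · -- periodic
    rintro t ⟨v, hv, z0, ht⟩ z
    exact ⟨v, hv, fun j => z0 j + z j, fun i => by simp only []; rw [ht i]; push_cast; ring⟩

lemma exists_big_coord_of_disjoint {d : ℕ} {x y : Fin d → ℝ}
    (h : Disjoint (cube d x) (cube d y)) : ∃ i, 1 ≤ |x i - y i| := by
  by_contra hc
  push_neg at hc
  exact not_disjoint_cube (fun i => hc i) h

lemma real_decomp {x : ℝ} (h0 : 0 ≤ x) (h2 : x < 2) :
    x = Int.fract x + (if 1 ≤ x then 1 else 0) := by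
  by_cases h1 : 1 ≤ x
  · have hfl : ⌊x⌋ = 1 :=
      Int.floor_eq_iff.mpr ⟨by exact_mod_cast h1, by push_cast; linarith⟩
    have : Int.fract x = x - ⌊x⌋ := rfl
    rw [if_pos h1, this, hfl]
    push_cast; ring
  · rw [if_neg h1, Int.fract_eq_self.2 ⟨h0, by linarith [not_le.1 h1]⟩]
    ring

lemma dir2 (d s : ℕ) (h2s : 2 * s = 2 ^ d) (hspos : 0 < s)
    (T : Set (Fin d → ℝ)) (hT : IsTiling d T) (hFF : FaceshareFree d T)
    (hP : PeriodicTiling d T) :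
    ∃ K : Finset (Fin d → Fin (2 * s)), (kellerGraph d s).IsNClique (2 ^ d) K := by
  classical
  -- covering
  have hcover : ∀ p : Fin d → ℝ, ∃ u ∈ T, p ∈ cube d u := by
    intro p
    have := hT.2
    rw [Set.eq_univ_iff_forall] at this
    obtain ⟨u, hu, hpu⟩ := Set.mem_iUnion₂.1 (this p)
    exact ⟨u, hu, hpu⟩
  -- representatives
  set R : Set (Fin d → ℝ) := {t | t ∈ T ∧ ∀ i, 0 ≤ t i ∧ t i < 2} with hR
  have hrep : ∀ u ∈ T, ∃ t ∈ R, ∀ j, ∃ m : ℤ, t j = u j + 2 * m := by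
    intro u hu
    refine ⟨fun j => u j + 2 * ((-⌊u j / 2⌋ : ℤ) : ℝ), ⟨hP u hu _, ?_⟩,
      fun j => ⟨-⌊u j / 2⌋, by push_cast; ring⟩⟩
    intro j
    have h1 := Int.floor_le (u j / 2)
    have h2 := Int.lt_floor_add_one (u j / 2)
    constructor <;> [push_cast; push_cast] <;> linarith
  -- Lemma A : any two distinct representatives differ by exactly ±1 somewhere
  have hA : ∀ t ∈ R, ∀ t' ∈ R, t ≠ t' →
      ∃ i, t' i - t i = 1 ∨ t' i - t i = -1 := by
    intro t ht t' ht' hne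
    by_contra hcon
    push_neg at hcon
    set z : Fin d → ℤ :=
      fun i => if 1 < t' i - t i then 1 else if t' i - t i < -1 then -1 else 0 with hz
    have ht2 : (fun j => t j + 2 * ((z j : ℤ) : ℝ)) ∈ T := hP t ht.1 z
    have hb : ∀ i, |(t i + 2 * ((z i : ℤ) : ℝ)) - t' i| < 1 := by
      intro i
      obtain ⟨hc1, hc2⟩ := hcon i
      obtain ⟨ht0, ht2'⟩ := ht.2 i
      obtain ⟨ht0', ht2''⟩ := ht'.2 i
      by_cases h1 : 1 < t' i - t i
      · rw [hz]; simp only [if_pos h1]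
        rw [abs_lt]; push_cast; constructor <;> linarith
      · by_cases h2 : t' i - t i < -1
        · rw [hz]; simp only [if_neg h1, if_pos h2]
          rw [abs_lt]; push_cast; constructor <;> linarith
        · rw [hz]; simp only [if_neg h1, if_neg h2]
          rw [abs_lt]; push_cast
          have hx1 : t' i - t i < 1 := lt_of_le_of_ne (not_lt.1 h1) hc1
          have hx2 : -1 < t' i - t i := lt_of_le_of_ne (not_lt.1 h2) (Ne.symm hc2)
          constructor <;> linarith
    have hne2 : (fun j => t j + 2 * ((z j : ℤ) : ℝ)) ≠ t' := by
      intro heq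
      apply hne
      funext i
      have hco := congrFun heq i
      obtain ⟨hc1, hc2⟩ := hcon i
      obtain ⟨ht0, ht2'⟩ := ht.2 i
      obtain ⟨ht0', ht2''⟩ := ht'.2 i
      rw [hz] at hco
      by_cases h1 : 1 < t' i - t i
      · simp only [if_pos h1] at hco; push_cast at hco; linarith
      · by_cases h2 : t' i - t i < -1
        · simp only [if_neg h1, if_pos h2] at hco; push_cast at hco; linarith
        · simp only [if_neg h1, if_neg h2] at hco; push_cast at hco; linarith
    exact not_disjoint_cube hb (hT.1 ht2 ht'.1 hne2)
  -- Lemma B : distinct representatives differ in at least two coordinates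
  have hB : ∀ t ∈ R, ∀ t' ∈ R, t ≠ t' →
      ∃ i j, i ≠ j ∧ t i ≠ t' i ∧ t j ≠ t' j := by
    intro t ht t' ht' hne
    obtain ⟨i, hi⟩ := hA t ht t' ht' hne
    have hti : t i ≠ t' i := by
      rcases hi with h | h <;> intro hh <;> rw [hh] at h <;> linarith
    by_contra hcon
    push_neg at hcon
    have hoff : ∀ j, j ≠ i → t j = t' j := fun j hj => hcon i j (Ne.symm hj) hti
    have hface : Faceshare d t t' := by
      refine ⟨i, ?_⟩
      rcases hi with h | h
      · left; funext j
        simp only [Pi.add_apply, stdBasis]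
        by_cases hji : j = i
        · rw [if_pos hji, hji]; linarith
        · rw [if_neg hji, ← hoff j hji]; ring
      · right; funext j
        simp only [Pi.sub_apply, stdBasis]
        by_cases hji : j = i
        · rw [if_pos hji, hji]; linarith
        · rw [if_neg hji, ← hoff j hji]; ring
    exact hFF t ht.1 t' ht'.1 hne hface
  -- Lemma C : pairing within fract classes
  have hC : ∀ t ∈ R, ∀ i : Fin d, ∃ t' ∈ R, t' ≠ t ∧ Int.fract (t' i) = Int.fract (t i) := by
    intro t ht i
    obtain ⟨u, hu, hpu⟩ := hcover (fun j => if j = i then t i + 1 else t j + 1/2)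
    have hut : u ≠ t := by
      intro heq
      have h2 := (hpu i).2
      rw [heq] at h2
      simp only [eq_self_iff_true, if_true] at h2
      linarith
    have hdis := hT.1 hu ht.1 hut
    obtain ⟨k, hk⟩ := exists_big_coord_of_disjoint hdis
    have hki : k = i := by
      by_contra hkk
      have h1 := (hpu k).1
      have h2 := (hpu k).2
      simp only [if_neg hkk] at h1 h2
      have : |u k - t k| ≤ 1/2 := abs_le.2 ⟨by linarith, by linarith⟩
      linarith
    subst hki
    have h1 := (hpu k).1
    have h2 := (hpu k).2
    simp only [eq_self_iff_true, if_true] at h1 h2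
    have huk : u k = t k + 1 := by
      rw [le_abs] at hk
      rcases hk with h | h
      · linarith
      · rw [le_neg] at h; linarith
    obtain ⟨t', ht'R, hm⟩ := hrep u hu
    obtain ⟨m, hmk⟩ := hm k
    refine ⟨t', ht'R, ?_, ?_⟩
    · intro heq
      rw [heq, huk] at hmk
      have hZ : ((1 + 2*m : ℤ):ℝ) = 0 := by push_cast; linarith
      have : (1 + 2*m : ℤ) = 0 := by exact_mod_cast hZ
      omega
    · rw [hmk, huk]
      have hco : t k + 1 + 2*(m:ℝ) = t k + ((2*m+1 : ℤ):ℝ) := by push_cast; ring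
      rw [hco, Int.fract_add_intCast]
  -- finiteness & cardinality
  have hinjφ : ∀ t ∈ R, ∀ t' ∈ R,
      (fun i => decide (1 ≤ t i)) = (fun i => decide (1 ≤ t' i)) → t = t' := by
    intro t ht t' ht' heq
    by_contra hne
    obtain ⟨i, hi | hi⟩ := hA t ht t' ht' hne
    · obtain ⟨h1, h2⟩ := ht.2 i; obtain ⟨h1', h2'⟩ := ht'.2 i
      have := congrFun heq i
      simp only [decide_eq_decide] at this
      have ha : ¬ (1 ≤ t i) := by intro hh; linarith
      have hb' : 1 ≤ t' i := by linarith
      tauto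
    · obtain ⟨h1, h2⟩ := ht.2 i; obtain ⟨h1', h2'⟩ := ht'.2 i
      have := congrFun heq i
      simp only [decide_eq_decide] at this
      have ha : 1 ≤ t i := by linarith
      have hb' : ¬ (1 ≤ t' i) := by intro hh; linarith
      tauto
  have hfin : R.Finite := by
    apply Set.Finite.of_finite_image (f := fun t => fun i => decide (1 ≤ t i))
    · exact Set.toFinite _
    · intro a ha b hb hab
      exact hinjφ a ha b hb hab
  set Rfin : Finset (Fin d → ℝ) := hfin.toFinset with hRfin
  have hmemR : ∀ t, t ∈ Rfin ↔ t ∈ R := fun t => Set.Finite.mem_toFinset hfin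
  have hcard_le : Rfin.card ≤ 2 ^ d := by
    have hle := Finset.card_le_card_of_injOn (t := (Finset.univ : Finset (Fin d → Bool)))
      (fun t => fun i : Fin d => decide (1 ≤ t i))
      (fun a _ => Finset.mem_univ _)
      (fun a ha b hb hab => hinjφ a ((hmemR a).1 ha) b ((hmemR b).1 hb) hab)
    calc Rfin.card ≤ (Finset.univ : Finset (Fin d → Bool)).card := hle
      _ = 2 ^ d := by simp
  have hlow : ∀ ε : Fin d → Bool, ∃ t ∈ R, ∃ z : Fin d → ℤ,
      ∀ i, t i + 2*(z i:ℝ) ≤ (if ε i then (1:ℝ) else 0) ∧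
        (if ε i then (1:ℝ) else 0) < t i + 2*(z i:ℝ) + 1 := by
    intro ε
    obtain ⟨u, hu, hpu⟩ := hcover (fun i => if ε i then (1:ℝ) else 0)
    obtain ⟨t, htR, hm⟩ := hrep u hu
    choose m hm using hm
    refine ⟨t, htR, fun j => - m j, fun i => ?_⟩
    have h1 := (hpu i).1
    have h2 := (hpu i).2
    have h3 := hm i
    push_cast
    constructor <;> linarith
  have hcard_ge : 2 ^ d ≤ Rfin.card := by
    choose ψ hψmem zf hψ using hlow
    have hle := Finset.card_le_card_of_injOn (s := (Finset.univ : Finset (Fin d → Bool)))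
      (t := Rfin) ψ (fun ε _ => (hmemR _).2 (hψmem ε)) ?_
    · calc 2^d = (Finset.univ : Finset (Fin d → Bool)).card := by simp
        _ ≤ Rfin.card := hle
    · intro ε _ δ _ hεδ
      by_contra hne
      obtain ⟨i, hi⟩ : ∃ i, ε i ≠ δ i := by
        by_contra hc; push_neg at hc; exact hne (funext hc)
      have h1 := hψ ε i
      have h2 := hψ δ i
      rw [hεδ] at h1
      cases hb : ε i <;> cases hb' : δ i <;> rw [hb] at h1 hi <;> rw [hb'] at h2 hi
      · exact hi rfl
      · norm_num at h1 h2
        obtain ⟨h1a, h1b⟩ := h1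
        obtain ⟨h2a, h2b⟩ := h2
        have hk1 : (0:ℝ) < ((zf δ i - zf ε i : ℤ):ℝ) := by push_cast; linarith
        have hk2 : ((zf δ i - zf ε i : ℤ):ℝ) < 1 := by push_cast; linarith
        have hZ1 : (0:ℤ) < zf δ i - zf ε i := by exact_mod_cast hk1
        have hZ2 : (zf δ i - zf ε i : ℤ) < 1 := by exact_mod_cast hk2
        omega
      · norm_num at h1 h2
        obtain ⟨h1a, h1b⟩ := h1
        obtain ⟨h2a, h2b⟩ := h2
        have hk1 : (0:ℝ) < ((zf ε i - zf δ i : ℤ):ℝ) := by push_cast; linarith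
        have hk2 : ((zf ε i - zf δ i : ℤ):ℝ) < 1 := by push_cast; linarith
        have hZ1 : (0:ℤ) < zf ε i - zf δ i := by exact_mod_cast hk1
        have hZ2 : (zf ε i - zf δ i : ℤ) < 1 := by exact_mod_cast hk2
        omega
      · exact hi rfl
  have hcardR : Rfin.card = 2 ^ d := le_antisymm hcard_le hcard_ge
  -- fract classes
  have hFcard : ∀ i : Fin d, (Rfin.image (fun t => Int.fract (t i))).card ≤ s := by
    intro i
    have hsum : Rfin.card = ∑ c ∈ Rfin.image (fun t => Int.fract (t i)),
        (Rfin.filter fun t => Int.fract (t i) = c).card :=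
      Finset.card_eq_sum_card_fiberwise (fun t ht => Finset.mem_image_of_mem _ ht)
    have hfib : ∀ c ∈ Rfin.image (fun t => Int.fract (t i)),
        2 ≤ (Rfin.filter fun t => Int.fract (t i) = c).card := by
      intro c hc
      obtain ⟨t0, ht0, hfr⟩ := Finset.mem_image.1 hc
      obtain ⟨t', ht'R, hne, hfr'⟩ := hC t0 ((hmemR _).1 ht0) i
      have hm1 : t0 ∈ Rfin.filter (fun t => Int.fract (t i) = c) :=
        Finset.mem_filter.2 ⟨ht0, hfr⟩
      have hm2 : t' ∈ Rfin.filter (fun t => Int.fract (t i) = c) :=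
        Finset.mem_filter.2 ⟨(hmemR _).2 ht'R, by rw [hfr', hfr]⟩
      have h12 : 1 < (Rfin.filter (fun t => Int.fract (t i) = c)).card :=
        Finset.one_lt_card.2 ⟨t', hm2, t0, hm1, hne⟩
      exact h12
    have hmul : 2 * (Rfin.image (fun t => Int.fract (t i))).card ≤ 2 ^ d := by
      calc 2 * (Rfin.image (fun t => Int.fract (t i))).card
          = ∑ _c ∈ Rfin.image (fun t => Int.fract (t i)), 2 := by
            rw [Finset.sum_const, smul_eq_mul, mul_comm]
        _ ≤ ∑ c ∈ Rfin.image (fun t => Int.fract (t i)),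
            (Rfin.filter fun t => Int.fract (t i) = c).card := Finset.sum_le_sum hfib
        _ = Rfin.card := hsum.symm
        _ = 2 ^ d := hcardR
    rw [← h2s] at hmul
    exact Nat.le_of_mul_le_mul_left hmul (by norm_num)
  -- encoding
  set idx : Fin d → ℝ → ℕ := fun i c =>
    if h : c ∈ Rfin.image (fun t => Int.fract (t i)) then
      (((Rfin.image (fun t => Int.fract (t i))).equivFin ⟨c, h⟩ : Fin _) : ℕ) else 0 with hidx
  have hidxlt : ∀ i c, idx i c < s := by
    intro i c
    rw [hidx]
    dsimp only
    split
    · exact lt_of_lt_of_le (Fin.is_lt _) (hFcard i)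
    · exact hspos
  have hidxinj : ∀ (i : Fin d), ∀ c ∈ Rfin.image (fun t => Int.fract (t i)),
      ∀ c' ∈ Rfin.image (fun t => Int.fract (t i)), idx i c = idx i c' → c = c' := by
    intro i c hc c' hc' he
    rw [hidx] at he
    dsimp only at he
    rw [dif_pos hc, dif_pos hc'] at he
    have := (Finset.equivFin _).injective (Fin.ext he)
    exact Subtype.ext_iff.1 this
  set enc : (Fin d → ℝ) → (Fin d → Fin (2*s)) := fun t i =>
    ⟨idx i (Int.fract (t i)) + (if 1 ≤ t i then s else 0), by
      have := hidxlt i (Int.fract (t i)); split <;> omega⟩ with henc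
  have hencval : ∀ t i, (enc t i : ℕ) = idx i (Int.fract (t i)) + (if 1 ≤ t i then s else 0) := by
    intro t i; rw [henc]
  have hencCoord : ∀ t ∈ R, ∀ t' ∈ R, ∀ i, enc t i = enc t' i → t i = t' i := by
    intro t ht t' ht' i he
    have hev : idx i (Int.fract (t i)) + (if 1 ≤ t i then s else 0)
        = idx i (Int.fract (t' i)) + (if 1 ≤ t' i then s else 0) := by
      rw [← hencval, ← hencval, he]
    have l1 := hidxlt i (Int.fract (t i))
    have l2 := hidxlt i (Int.fract (t' i))
    have hiff : (1 ≤ t i) ↔ (1 ≤ t' i) := by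
      by_cases a : 1 ≤ t i <;> by_cases b : 1 ≤ t' i
      · exact iff_of_true a b
      · exfalso; rw [if_pos a, if_neg b] at hev; omega
      · exfalso; rw [if_neg a, if_pos b] at hev; omega
      · exact iff_of_false a b
    have hidxeq : idx i (Int.fract (t i)) = idx i (Int.fract (t' i)) := by
      by_cases a : 1 ≤ t i
      · rw [if_pos a, if_pos (hiff.1 a)] at hev; omega
      · rw [if_neg a, if_neg (fun hb => a (hiff.2 hb))] at hev; omega
    have hfr : Int.fract (t i) = Int.fract (t' i) :=
      hidxinj i _ (Finset.mem_image_of_mem _ ((hmemR t).2 ht))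
        _ (Finset.mem_image_of_mem _ ((hmemR t').2 ht')) hidxeq
    have d1 := real_decomp (ht.2 i).1 (ht.2 i).2
    have d2 := real_decomp (ht'.2 i).1 (ht'.2 i).2
    rw [d1, d2, hfr]
    by_cases a : 1 ≤ t i
    · rw [if_pos a, if_pos (hiff.1 a)]
    · rw [if_neg a, if_neg fun hb => a (hiff.2 hb)]
  have hclause1 : ∀ t ∈ R, ∀ t' ∈ R, t ≠ t' →
      ∃ i, ((enc t i : ℕ) + s = (enc t' i : ℕ) ∨ (enc t' i : ℕ) + s = (enc t i : ℕ)) := by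
    intro t ht t' ht' hne
    obtain ⟨i, hi⟩ := hA t ht t' ht' hne
    refine ⟨i, ?_⟩
    obtain ⟨a0, a2⟩ := ht.2 i
    obtain ⟨b0, b2⟩ := ht'.2 i
    rcases hi with h | h
    · have hfr : Int.fract (t' i) = Int.fract (t i) := by
        have hc : t' i = t i + ((1:ℤ):ℝ) := by push_cast; linarith
        rw [hc, Int.fract_add_intCast]
      have ha : ¬ (1 ≤ t i) := by intro hh; linarith
      have hb : 1 ≤ t' i := by linarith
      left
      rw [hencval, hencval, hfr, if_neg ha, if_pos hb]
      omega
    · have hfr : Int.fract (t i) = Int.fract (t' i) := by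
        have hc : t i = t' i + ((1:ℤ):ℝ) := by push_cast; linarith
        rw [hc, Int.fract_add_intCast]
      have ha : 1 ≤ t i := by linarith
      have hb : ¬ (1 ≤ t' i) := by intro hh; linarith
      right
      rw [hencval, hencval, hfr, if_pos ha, if_neg hb]
      omega
  have hencCoordNe : ∀ t ∈ R, ∀ t' ∈ R, ∀ i, t i ≠ t' i → enc t i ≠ enc t' i :=
    fun t ht t' ht' i hne he => hne (hencCoord t ht t' ht' i he)
  have hencInj : ∀ t ∈ R, ∀ t' ∈ R, enc t = enc t' → t = t' := by
    intro t ht t' ht' he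
    by_contra hne
    obtain ⟨i, hi⟩ := hclause1 t ht t' ht' hne
    have hco := congrFun he i
    rcases hi with h | h <;> rw [hco] at h <;> omega
  refine ⟨Rfin.image enc, ⟨?_, ?_⟩⟩
  · intro x hx y hy hxy
    obtain ⟨t, ht, rfl⟩ := Finset.mem_image.1 (Finset.mem_coe.1 hx)
    obtain ⟨t', ht', rfl⟩ := Finset.mem_image.1 (Finset.mem_coe.1 hy)
    have htR := (hmemR t).1 ht
    have ht'R := (hmemR t').1 ht'
    have hne : t ≠ t' := fun h => hxy (by rw [h])
    refine ⟨hclause1 t htR t' ht'R hne, ?_⟩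
    obtain ⟨i, j, hij, hi1, hj1⟩ := hB t htR t' ht'R hne
    exact ⟨i, j, hij, hencCoordNe t htR t' ht'R i hi1, hencCoordNe t htR t' ht'R j hj1⟩
  · rw [Finset.card_image_of_injOn
      (fun a ha b hb hab => hencInj a ((hmemR a).1 ha) b ((hmemR b).1 hb) hab), hcardR]

/-- For `d ≥ 1`, `ℝ^d` admits a faceshare-free periodic cube tiling iff the Keller
graph `G_{d,s}` with `s = 2^(d-1)` contains a clique of size `2^d`. -/
theorem periodic_tiling_iff_keller_clique (d : ℕ) (hd : 1 ≤ d) :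
    (∃ T : Set (Fin d → ℝ), IsTiling d T ∧ FaceshareFree d T ∧ PeriodicTiling d T) ↔
    (∃ K : Finset (Fin d → Fin (2 * 2 ^ (d - 1))),
      (kellerGraph d (2 ^ (d - 1))).IsNClique (2 ^ d) K) := by
  have h2s : 2 * 2 ^ (d - 1) = 2 ^ d := by
    rw [← pow_succ']
    congr 1
    omega
  have hspos : 0 < 2 ^ (d - 1) := Nat.pow_pos (by norm_num)
  constructor
  · rintro ⟨T, hT, hFF, hP⟩
    exact dir2 d _ h2s hspos T hT hFF hP
  · rintro ⟨K, hK⟩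
    exact dir1 d _ h2s hspos K hK
end
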